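/- Let a directed network be given by a finite vertex set V with |V| = N, a finite link index set Λ with |Λ| = L, source and target maps s, t : Λ → V, and delays τ : Λ → ℝ. Suppose that for some time-shift vector η : V → ℝ the number of links with nonzero transformed delay τ̃(ℓ) = τ(ℓ) + η(s(ℓ)) − η(t(ℓ)) is strictly less than C = L − (N − 1). Then there exists a semicycle c of the network all of whose links satisfy τ̃(ℓ) = 0, and consequently the generalized round-trip time of c with respect to the original delays vanishes: T(c) = |∑ᵢ Γᵢ τ(ℓᵢ)| = 0. In other words, a reduction below the essential number C of delays is possible only if some semicycle has zero generalized round-trip time. -/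

import Mathlib

/-- A semicycle of a directed network with source/target maps `s, t : Λ → V`:
a closed undirected path given by pairwise distinct links `links 0, …, links (k-1)`,
signs `Γᵢ ∈ {+1, −1}` and vertices `v₀, …, v_k` with `v_k = v₀`, such that link
`i` goes from `v_i` to `v_{i+1}` if `Γᵢ = +1` and from `v_{i+1}` to `v_i` if
`Γᵢ = −1`. -/
structure Semicycle {V Λ : Type*} (s t : Λ → V) where
  k : ℕ
  kpos : 0 < k
  links : Fin k → Λ
  links_inj : Function.Injective links
  sign : Fin k → ℝ
  sign_pm : ∀ i, sign i = 1 ∨ sign i = -1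
  vert : Fin (k + 1) → V
  closed : vert (Fin.last k) = vert 0
  compat : ∀ i : Fin k,
    (sign i = 1 → s (links i) = vert i.castSucc ∧ t (links i) = vert i.succ) ∧
    (sign i = -1 → s (links i) = vert i.succ ∧ t (links i) = vert i.castSucc)

section Aux

variable {V Λ : Type*} [DecidableEq V] [DecidableEq Λ] (s t : Λ → V)

/-- A self-loop gives a semicycle. -/
lemma semicycle_of_loop {ℓ : Λ} (h : s ℓ = t ℓ) (E : Finset Λ) (hℓ : ℓ ∈ E) :
    ∃ c : Semicycle s t, ∀ i, c.links i ∈ E := by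
  refine ⟨⟨1, one_pos, fun _ => ℓ, fun a b _ => Subsingleton.elim a b,
    fun _ => 1, fun _ => Or.inl rfl, fun _ => s ℓ, rfl, ?_⟩, fun _ => hℓ⟩
  intro i
  exact ⟨fun _ => ⟨rfl, h.symm⟩, fun h1 => absurd h1 (by norm_num)⟩

/-- In a loopless multigraph in which every touched vertex has degree at least two,
there is a semicycle. -/
lemma exists_semicycle_of_min_degree_two [Fintype V] (E : Finset Λ)
    (hnl : ∀ ℓ ∈ E, s ℓ ≠ t ℓ)
    (H2 : ∀ v : V, (∃ e ∈ E, s e = v ∨ t e = v) →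
      2 ≤ (E.filter (fun e => s e = v ∨ t e = v)).card)
    {ℓ₀ : Λ} (h0 : ℓ₀ ∈ E) :
    ∃ c : Semicycle s t, ∀ i, c.links i ∈ E := by
  classical
  -- there is always a second edge at a vertex of an edge
  have hstep : ∀ (v : V) (e : Λ), e ∈ E → (s e = v ∨ t e = v) →
      ∃ e', (e' ∈ E ∧ (s e' = v ∨ t e' = v)) ∧ e' ≠ e := by
    intro v e he hi
    have h2 : 2 ≤ (E.filter (fun e => s e = v ∨ t e = v)).card := H2 v ⟨e, he, hi⟩
    have hmem : e ∈ E.filter (fun e => s e = v ∨ t e = v) :=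
      Finset.mem_filter.2 ⟨he, hi⟩
    have hne : ((E.filter (fun e => s e = v ∨ t e = v)).erase e).Nonempty := by
      rw [← Finset.card_pos, Finset.card_erase_of_mem hmem]; omega
    obtain ⟨e', he'⟩ := hne
    rw [Finset.mem_erase] at he'
    exact ⟨e', Finset.mem_filter.1 he'.2, he'.1⟩
  -- next vertex along an edge
  let nxt : Λ → V → V := fun e v => if s e = v then t e else s e
  have hnxt_inc : ∀ e v, s e = nxt e v ∨ t e = nxt e v := by
    intro e v
    by_cases h : s e = v
    · right; simp only [nxt, if_pos h]
    · left; simp only [nxt, if_neg h]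
  -- the walk
  let step : Λ × V → Λ × V := fun p =>
    if h : p.1 ∈ E ∧ (s p.1 = p.2 ∨ t p.1 = p.2) then
      (Classical.choose (hstep (nxt p.1 p.2) p.1 h.1 (hnxt_inc p.1 p.2)), nxt p.1 p.2)
    else p
  let w : ℕ → Λ × V := fun n => Nat.rec (ℓ₀, s ℓ₀) (fun _ p => step p) n
  have hwsucc : ∀ n, w (n + 1) = step (w n) := fun n => rfl
  have Inv : ∀ n, (w n).1 ∈ E ∧ (s (w n).1 = (w n).2 ∨ t (w n).1 = (w n).2) := by
    intro n
    induction n with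
    | zero => exact ⟨h0, Or.inl rfl⟩
    | succ n ih =>
      rw [hwsucc]
      simp only [step, dif_pos ih]
      exact (Classical.choose_spec
        (hstep (nxt (w n).1 (w n).2) (w n).1 ih.1 (hnxt_inc _ _))).1
  have hvtx_succ : ∀ n, (w (n + 1)).2 = nxt (w n).1 (w n).2 := by
    intro n
    rw [hwsucc]
    simp only [step, dif_pos (Inv n)]
  have hedge_ne : ∀ n, (w (n + 1)).1 ≠ (w n).1 := by
    intro n
    rw [hwsucc]
    simp only [step, dif_pos (Inv n)]
    exact (Classical.choose_spec
      (hstep (nxt (w n).1 (w n).2) (w n).1 (Inv n).1 (hnxt_inc _ _))).2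
  -- each edge of the walk connects the consecutive vertices
  have hC : ∀ n, (s (w n).1 = (w n).2 ∧ t (w n).1 = (w (n + 1)).2) ∨
      (s (w n).1 = (w (n + 1)).2 ∧ t (w n).1 = (w n).2) := by
    intro n
    by_cases h : s (w n).1 = (w n).2
    · left
      refine ⟨h, ?_⟩
      rw [hvtx_succ n]
      simp only [nxt, if_pos h]
    · right
      have ht : t (w n).1 = (w n).2 := ((Inv n).2).resolve_left h
      refine ⟨?_, ht⟩
      rw [hvtx_succ n]
      simp only [nxt, if_neg h]
  -- pigeonhole: a vertex repeats
  have hPex : ∃ m : ℕ, ∃ i' < m, (w i').2 = (w m).2 := by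
    obtain ⟨a, b, hab, hvab⟩ := Fintype.exists_ne_map_eq_of_card_lt
      (fun i : Fin (Fintype.card V + 1) => (w i).2)
      (by simpa using Nat.lt_succ_self (Fintype.card V))
    rcases Nat.lt_trichotomy (a : ℕ) (b : ℕ) with h | h | h
    · exact ⟨b, a, h, hvab⟩
    · exact absurd (Fin.ext h) hab
    · exact ⟨a, b, h, hvab.symm⟩
  let J := Nat.find hPex
  obtain ⟨I, hIJ, hvIJ⟩ : ∃ i' < J, (w i').2 = (w J).2 := Nat.find_spec hPex
  have hmin : ∀ a b : ℕ, a < b → b < J → (w a).2 ≠ (w b).2 := by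
    intro a b h1 h2 he
    exact Nat.find_min hPex h2 ⟨a, h1, he⟩
  -- distinctness of the edges along the cycle part
  have key : ∀ a b : ℕ, I ≤ a → a < b → b < J → (w a).1 ≠ (w b).1 := by
    intro a b hIa hab hbJ heq
    have main : (w (a + 1)).2 = (w b).2 → (w a).2 = (w (b + 1)).2 → False := by
      intro h1 h2
      have hb_eq : b = a + 1 := by
        by_contra hne
        exact hmin (a + 1) b (by omega) hbJ h1
      subst hb_eq
      have h2' : (w a).2 = (w (a + 2)).2 := h2
      have hJ : a + 2 = J := by
        by_contra hne
        exact hmin a (a + 2) (by omega) (by omega) h2'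
      have hI' : (w a).2 = (w I).2 := by rw [h2', hJ, ← hvIJ]
      have haI : a = I := by
        by_contra hne
        exact hmin I a (by omega) (by omega) hI'.symm
      exact hedge_ne a heq.symm
    rcases hC a with ⟨ha1, ha2⟩ | ⟨ha1, ha2⟩ <;>
      rcases hC b with ⟨hb1, hb2⟩ | ⟨hb1, hb2⟩
    · exact hmin a b hab hbJ (ha1 ▸ heq ▸ hb1)
    · exact main (ha2 ▸ heq ▸ hb2) (ha1 ▸ heq ▸ hb1)
    · exact main (ha1 ▸ heq ▸ hb1) (ha2 ▸ heq ▸ hb2)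
    · exact hmin a b hab hbJ (ha2 ▸ heq ▸ hb2)
  -- build the semicycle
  have hkpos : 0 < J - I := by omega
  refine ⟨⟨J - I, hkpos, fun m => (w (I + (m : ℕ))).1, ?_,
    fun m => if s (w (I + (m : ℕ))).1 = (w (I + (m : ℕ))).2 then 1 else -1,
    fun m => by split <;> simp,
    fun m => (w (I + (m : ℕ))).2, ?_, ?_⟩, fun m => (Inv (I + (m : ℕ))).1⟩
  · -- injectivity
    intro a b hab2
    by_contra hne
    have ha := a.isLt
    have hb := b.isLt
    have hne' : (a : ℕ) ≠ (b : ℕ) := fun h => hne (Fin.ext h)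
    rcases Nat.lt_or_ge (a : ℕ) (b : ℕ) with h | h
    · exact key (I + a) (I + b) (Nat.le_add_right I a) (by omega) (by omega) hab2
    · exact key (I + b) (I + a) (Nat.le_add_right I b) (by omega) (by omega) hab2.symm
  · -- closed
    show (w (I + ((Fin.last (J - I)) : ℕ))).2 = (w (I + (((0 : Fin (J - I + 1))) : ℕ))).2
    rw [Fin.val_last, Fin.val_zero]
    rw [show I + (J - I) = J by omega]
    exact hvIJ.symm
  · -- compat
    intro m
    have hloop := hnl _ (Inv (I + (m : ℕ))).1
    constructor
    · intro hs
      simp only [Fin.coe_castSucc, Fin.val_succ, ← Nat.add_assoc]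
      by_cases hcond : s (w (I + (m : ℕ))).1 = (w (I + (m : ℕ))).2
      · rcases hC (I + (m : ℕ)) with h | h
        · exact h
        · exact absurd (hcond.trans h.2.symm) hloop
      · rw [if_neg hcond] at hs
        norm_num at hs
    · intro hs
      simp only [Fin.coe_castSucc, Fin.val_succ, ← Nat.add_assoc]
      by_cases hcond : s (w (I + (m : ℕ))).1 = (w (I + (m : ℕ))).2
      · rw [if_pos hcond] at hs
        norm_num at hs
      · rcases hC (I + (m : ℕ)) with h | h
        · exact absurd h.1 hcond
        · exact ⟨h.1, h.2⟩

/-- If the number of links is at least the number of vertices, there is a semicycle. -/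
lemma exists_semicycle_of_card_le [Fintype V] :
    ∀ (n : ℕ) (W : Finset V) (E : Finset Λ), W.card ≤ n →
      (∀ ℓ ∈ E, s ℓ ∈ W ∧ t ℓ ∈ W) → W.card ≤ E.card → E.Nonempty →
      ∃ c : Semicycle s t, ∀ i, c.links i ∈ E := by
  intro n
  induction n with
  | zero =>
    rintro W E hWn hend hWE ⟨ℓ, hℓ⟩
    have h1 := (hend ℓ hℓ).1
    have h2 : W = ∅ := Finset.card_eq_zero.1 (Nat.le_zero.1 hWn)
    rw [h2] at h1
    exact absurd h1 (Finset.notMem_empty _)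
  | succ n ih =>
    intro W E hWn hend hWE hE
    by_cases hloop : ∃ ℓ ∈ E, s ℓ = t ℓ
    · obtain ⟨ℓ, hℓ, he⟩ := hloop
      exact semicycle_of_loop s t he E hℓ
    push_neg at hloop
    by_cases hdeg : ∃ v ∈ W, (E.filter (fun e => s e = v ∨ t e = v)).card ≤ 1
    · obtain ⟨v, hvW, hv1⟩ := hdeg
      set E' := E.filter (fun e => ¬(s e = v ∨ t e = v)) with hE'
      have hcard : (E.filter (fun e => s e = v ∨ t e = v)).card + E'.card = E.card :=
        Finset.card_filter_add_card_filter_not _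
      have hend' : ∀ ℓ ∈ E', s ℓ ∈ W.erase v ∧ t ℓ ∈ W.erase v := by
        intro ℓ hℓ
        rw [hE', Finset.mem_filter] at hℓ
        push_neg at hℓ
        exact ⟨Finset.mem_erase.2 ⟨hℓ.2.1, (hend ℓ hℓ.1).1⟩,
          Finset.mem_erase.2 ⟨hℓ.2.2, (hend ℓ hℓ.1).2⟩⟩
      have hWcard : (W.erase v).card = W.card - 1 := Finset.card_erase_of_mem hvW
      have hWpos : 1 ≤ W.card := Finset.card_pos.2 ⟨v, hvW⟩
      have hE'ne : E'.Nonempty := by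
        rw [← Finset.card_pos]
        by_contra hc
        push_neg at hc
        have h0 : E'.card = 0 := by omega
        have hW1 : W.card = 1 := by omega
        obtain ⟨u, hu⟩ := Finset.card_eq_one.1 hW1
        have huv : u = v := by
          have := hvW
          rw [hu, Finset.mem_singleton] at this
          exact this.symm
        obtain ⟨ℓ, hℓ⟩ := hE
        have h1 := (hend ℓ hℓ).1
        have h2 := (hend ℓ hℓ).2
        rw [hu, Finset.mem_singleton] at h1 h2
        exact hloop ℓ hℓ (h1.trans h2.symm)
      obtain ⟨c, hc⟩ := ih (W.erase v) E' (by omega) hend' (by omega) hE'ne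
      exact ⟨c, fun i => Finset.filter_subset _ _ (hc i)⟩
    · push_neg at hdeg
      obtain ⟨ℓ₀, h0⟩ := hE
      refine exists_semicycle_of_min_degree_two s t E hloop ?_ h0
      rintro v ⟨e, he, hi⟩
      have hvW : v ∈ W := by
        rcases hi with h | h
        · rw [← h]; exact (hend e he).1
        · rw [← h]; exact (hend e he).2
      exact hdeg v hvW

end Aux

/-- **Reduction below the essential number of delays forces a semicycle of zero
round-trip time.** If for some time shift `η` the number of links with nonzero
transformed delay is strictly less than the cycle space dimension
`C = L − (N − 1)`, then there is a semicycle all of whose links are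
instantaneous after the transformation, and its generalized round-trip time
with respect to the original delays vanishes. -/
theorem reduction_below_cycle_dim_gives_zero_roundtrip_semicycle
    {V Λ : Type*} [Fintype V] [Fintype Λ]
    (s t : Λ → V) (τ : Λ → ℝ) (η : V → ℝ)
    (hfew : {ℓ : Λ | τ ℓ + η (s ℓ) - η (t ℓ) ≠ 0}.ncard <
      Fintype.card Λ - (Fintype.card V - 1)) :
    ∃ c : Semicycle s t,
      (∀ i : Fin c.k, τ (c.links i) + η (s (c.links i)) - η (t (c.links i)) = 0) ∧
      ∑ i : Fin c.k, c.sign i * τ (c.links i) = 0 := by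
  classical
  set E : Finset Λ := Finset.univ.filter (fun ℓ => τ ℓ + η (s ℓ) - η (t ℓ) = 0) with hEdef
  have hbad : {ℓ : Λ | τ ℓ + η (s ℓ) - η (t ℓ) ≠ 0}.ncard =
      (Finset.univ.filter (fun ℓ => ¬(τ ℓ + η (s ℓ) - η (t ℓ) = 0))).card := by
    rw [Set.ncard_eq_toFinset_card']
    congr 1
    ext ℓ
    simp
  have hsum : E.card +
      (Finset.univ.filter (fun ℓ => ¬(τ ℓ + η (s ℓ) - η (t ℓ) = 0))).card =
      Fintype.card Λ := by
    rw [hEdef, Finset.card_filter_add_card_filter_not, Finset.card_univ]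
  rw [hbad] at hfew
  -- V is nonempty (otherwise Λ is empty and the hypothesis is absurd)
  rcases isEmpty_or_nonempty V with hV | hV
  · have : IsEmpty Λ := ⟨fun ℓ => hV.false (s ℓ)⟩
    have hL0 : Fintype.card Λ = 0 := Fintype.card_eq_zero
    omega
  have hNpos : 1 ≤ Fintype.card V := Fintype.card_pos
  have hcardE : Fintype.card V ≤ E.card := by omega
  have hEne : E.Nonempty := Finset.card_pos.1 (by omega)
  obtain ⟨c, hc⟩ := exists_semicycle_of_card_le s t (Fintype.card V) Finset.univ E
    (by simp [Finset.card_univ]) (fun ℓ _ => ⟨Finset.mem_univ _, Finset.mem_univ _⟩)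
    (by simpa [Finset.card_univ] using hcardE) hEne
  have hzero : ∀ i, τ (c.links i) + η (s (c.links i)) - η (t (c.links i)) = 0 :=
    fun i => (Finset.mem_filter.1 (hc i)).2
  refine ⟨c, hzero, ?_⟩
  -- telescoping sum
  let F : ℕ → ℝ := fun n => if h : n < c.k + 1 then η (c.vert ⟨n, h⟩) else 0
  have hterm : ∀ i : Fin c.k, c.sign i * τ (c.links i) = F ((i : ℕ) + 1) - F (i : ℕ) := by
    intro i
    have hF1 : F ((i : ℕ) + 1) = η (c.vert i.succ) := by
      simp only [F]
      rw [dif_pos (Nat.succ_lt_succ i.isLt)]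
      congr 1
    have hF0 : F (i : ℕ) = η (c.vert i.castSucc) := by
      simp only [F]
      rw [dif_pos (Nat.lt_succ_of_lt i.isLt)]
      congr 1
    rw [hF1, hF0]
    rcases c.sign_pm i with h | h
    · obtain ⟨h1, h2⟩ := (c.compat i).1 h
      have h0 := hzero i
      rw [h1, h2] at h0
      rw [h]
      linarith
    · obtain ⟨h1, h2⟩ := (c.compat i).2 h
      have h0 := hzero i
      rw [h1, h2] at h0
      rw [h]
      linarith
  rw [Finset.sum_congr rfl (fun i _ => hterm i)]
  rw [show (∑ i : Fin c.k, (F ((i : ℕ) + 1) - F (i : ℕ))) =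
      ∑ i ∈ Finset.range c.k, (F (i + 1) - F i) from
    Fin.sum_univ_eq_sum_range (fun n => F (n + 1) - F n) c.k]
  rw [Finset.sum_range_sub F c.k]
  have hFk : F c.k = F 0 := by
    simp only [F]
    rw [dif_pos (Nat.lt_succ_self c.k), dif_pos (Nat.succ_pos c.k)]
    have h1 : (⟨c.k, Nat.lt_succ_self c.k⟩ : Fin (c.k + 1)) = Fin.last c.k := rfl
    have h2 : (⟨0, Nat.succ_pos c.k⟩ : Fin (c.k + 1)) = 0 := by
      apply Fin.ext
      simp
    rw [h1, h2, c.closed]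
  rw [hFk, sub_self]
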